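/- arXiv:2006.00564 — 7 statements merged into one kernel-verified Lean document; each statement's English description precedes it below -/
import Mathlib

section
/- Let α, β ∈ ℝ and let φ₁, φ₂ : ℝ² → ℝ be continuously differentiable. Define the skew-symmetric matrix-valued map π : ℝ³ → Matrix(3,3,ℝ) on coordinates (S,I,R) by π_{SI} = 0, π_{SR} = −β·S·I + φ₁(S,I), π_{IR} = −α·I + β·S·I + φ₂(S,I) (and skew-symmetry determining the remaining entries, zero on the diagonal). Then π satisfies the Jacobi identity: for all x ∈ ℝ³ and all indices i,j,k, ∑_l (π_{l i}(x)·∂_l π_{j k}(x) + π_{l j}(x)·∂_l π_{k i}(x) + π_{l k}(x)·∂_l π_{i j}(x)) = 0. -/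
/-- A pointwise skew-symmetric matrix-valued map `P : ℝⁿ → Matrix(n,n,ℝ)` satisfies the
Jacobi identity if for all `x` and indices `i j k`,
`∑ l, (P_{l i}(x)·∂_l P_{j k}(x) + P_{l j}(x)·∂_l P_{k i}(x) + P_{l k}(x)·∂_l P_{i j}(x)) = 0`. -/
def JacobiIdentity {n : Type*} [Fintype n] [DecidableEq n]
    (P : (n → ℝ) → Matrix n n ℝ) : Prop :=
  ∀ x : n → ℝ, ∀ i j k : n,
    ∑ l : n,
      (P x l i * fderiv ℝ (fun y => P y j k) x (Pi.single l 1) +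
        P x l j * fderiv ℝ (fun y => P y k i) x (Pi.single l 1) +
        P x l k * fderiv ℝ (fun y => P y i j) x (Pi.single l 1)) = 0

/-- The Poisson structure of the generalized SIR model, on coordinates `(S,I,R) = (x 0, x 1, x 2)`:
`π_{SI} = 0`, `π_{SR} = −β·S·I + φ₁(S,I)`, `π_{IR} = −α·I + β·S·I + φ₂(S,I)`,
skew-symmetry determining the remaining entries. -/
noncomputable def sirPoisson (α β : ℝ) (φ₁ φ₂ : ℝ × ℝ → ℝ) (x : Fin 3 → ℝ) :
    Matrix (Fin 3) (Fin 3) ℝ :=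
  Matrix.of
    ![![0, 0, -β * x 0 * x 1 + φ₁ (x 0, x 1)],
      ![0, 0, -α * x 1 + β * x 0 * x 1 + φ₂ (x 0, x 1)],
      ![-(-β * x 0 * x 1 + φ₁ (x 0, x 1)),
        -(-α * x 1 + β * x 0 * x 1 + φ₂ (x 0, x 1)), 0]]

noncomputable def proj01 : ((Fin 3) → ℝ) →L[ℝ] ℝ × ℝ :=
  (ContinuousLinearMap.proj 0).prod (ContinuousLinearMap.proj 1)

lemma key2 (F : ℝ × ℝ → ℝ) (hF : Differentiable ℝ F) (x : Fin 3 → ℝ) :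
    fderiv ℝ (fun y : Fin 3 → ℝ => F (y 0, y 1)) x (Pi.single 2 1) = 0 := by
  have h : (fun y : Fin 3 → ℝ => F (y 0, y 1)) = F ∘ proj01 := rfl
  rw [h, fderiv_comp x (hF _) (proj01.differentiableAt), proj01.fderiv]
  have : proj01 (Pi.single 2 1) = 0 := by
    simp [proj01, Prod.ext_iff, Pi.single_eq_of_ne]
  simp [this]

theorem generalizedSIR_poisson_jacobi (α β : ℝ) (φ₁ φ₂ : ℝ × ℝ → ℝ)
    (hφ₁ : ContDiff ℝ 1 φ₁) (hφ₂ : ContDiff ℝ 1 φ₂) :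
    JacobiIdentity (sirPoisson α β φ₁ φ₂) := by
  intro x i j k
  have d1 : Differentiable ℝ φ₁ := hφ₁.differentiable one_ne_zero
  have d2 : Differentiable ℝ φ₂ := hφ₂.differentiable one_ne_zero
  have hg : fderiv ℝ (fun y : Fin 3 → ℝ => -β * y 0 * y 1 + φ₁ (y 0, y 1)) x
      (Pi.single 2 1) = 0 :=
    key2 (fun p => -β * p.1 * p.2 + φ₁ p) (by fun_prop) x
  have hh : fderiv ℝ (fun y : Fin 3 → ℝ => -α * y 1 + β * y 0 * y 1 + φ₂ (y 0, y 1)) x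
      (Pi.single 2 1) = 0 :=
    key2 (fun p => -α * p.2 + β * p.1 * p.2 + φ₂ p) (by fun_prop) x
  fin_cases i <;> fin_cases j <;> fin_cases k <;>
  · simp only [Fin.sum_univ_three, Fin.mk_zero, Fin.mk_one,
      show (⟨2, by omega⟩ : Fin 3) = 2 from rfl]
    simp only [show ∀ y, sirPoisson α β φ₁ φ₂ y 1 2 = -α * y 1 + β * y 0 * y 1 + φ₂ (y 0, y 1)
        from fun _ => rfl,
      show ∀ y, sirPoisson α β φ₁ φ₂ y 2 0 = -(-β * y 0 * y 1 + φ₁ (y 0, y 1)) from fun _ => rfl,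
      show ∀ y, sirPoisson α β φ₁ φ₂ y 0 1 = (0:ℝ) from fun _ => rfl,
      show ∀ y, sirPoisson α β φ₁ φ₂ y 0 0 = (0:ℝ) from fun _ => rfl,
      show ∀ y, sirPoisson α β φ₁ φ₂ y 1 0 = (0:ℝ) from fun _ => rfl,
      show ∀ y, sirPoisson α β φ₁ φ₂ y 1 1 = (0:ℝ) from fun _ => rfl,
      show ∀ y, sirPoisson α β φ₁ φ₂ y 0 2 = -β * y 0 * y 1 + φ₁ (y 0, y 1) from fun _ => rfl,
      show ∀ y, sirPoisson α β φ₁ φ₂ y 2 1 = -(-α * y 1 + β * y 0 * y 1 + φ₂ (y 0, y 1))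
        from fun _ => rfl,
      show ∀ y, sirPoisson α β φ₁ φ₂ y 2 2 = (0:ℝ) from fun _ => rfl]
    simp only [fderiv_fun_neg, fderiv_fun_const, Pi.zero_apply, ContinuousLinearMap.zero_apply,
      ContinuousLinearMap.neg_apply, hg, hh]
    ring
end

section
/- Let α, β ∈ ℝ and let φ₁, φ₂ : ℝ² → ℝ. Let π : ℝ³ → Matrix(3,3,ℝ) be the skew-symmetric matrix-valued map on coordinates (S,I,R) with π_{SI} = 0, π_{SR} = −β·S·I + φ₁(S,I), π_{IR} = −α·I + β·S·I + φ₂(S,I), and let H(S,I,R) = S + I + R. Then for every (S,I,R) ∈ ℝ³, the vector π(S,I,R)·∇H(S,I,R) equals the right-hand side of the generalized SIR system, namely (−β·S·I + φ₁(S,I), β·S·I − α·I + φ₂(S,I), α·I − φ₁(S,I) − φ₂(S,I)). In particular every solution of Hamilton's equations ẋ = π(x)·∇H(x) solves the generalized SIR system. -/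
/-- The Hamiltonian vector field `π(x)·∇H(x)` of a matrix-valued map `P` and Hamiltonian `H`. -/
noncomputable def hamVF {n : Type*} [Fintype n] [DecidableEq n]
    (P : (n → ℝ) → Matrix n n ℝ) (H : (n → ℝ) → ℝ) (x : n → ℝ) : n → ℝ :=
  (P x).mulVec fun j => fderiv ℝ H x (Pi.single j 1)

/-- The total population Hamiltonian `H(S,I,R) = S + I + R`. -/
def totalPop3 : (Fin 3 → ℝ) → ℝ := fun x => x 0 + x 1 + x 2

/-- The right-hand side of the generalized SIR system. -/
noncomputable def sirField (α β : ℝ) (φ₁ φ₂ : ℝ × ℝ → ℝ) (x : Fin 3 → ℝ) : Fin 3 → ℝ :=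
  ![-β * x 0 * x 1 + φ₁ (x 0, x 1),
    β * x 0 * x 1 - α * x 1 + φ₂ (x 0, x 1),
    α * x 1 - φ₁ (x 0, x 1) - φ₂ (x 0, x 1)]

lemma fderiv_totalPop3 (x : Fin 3 → ℝ) (v : Fin 3 → ℝ) :
    fderiv ℝ totalPop3 x v = v 0 + v 1 + v 2 := by
  have h : HasFDerivAt totalPop3
      ((ContinuousLinearMap.proj 0 : (Fin 3 → ℝ) →L[ℝ] ℝ)
        + ContinuousLinearMap.proj 1 + ContinuousLinearMap.proj 2) x := by
    have h0 := (ContinuousLinearMap.proj (R := ℝ) (φ := fun _ : Fin 3 => ℝ) 0).hasFDerivAt (x := x)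
    have h1 := (ContinuousLinearMap.proj (R := ℝ) (φ := fun _ : Fin 3 => ℝ) 1).hasFDerivAt (x := x)
    have h2 := (ContinuousLinearMap.proj (R := ℝ) (φ := fun _ : Fin 3 => ℝ) 2).hasFDerivAt (x := x)
    exact ((h0.add h1).add h2 : )
  rw [h.fderiv]
  simp [ContinuousLinearMap.proj]

theorem generalizedSIR_hamiltonian (α β : ℝ) (φ₁ φ₂ : ℝ × ℝ → ℝ) :
    (∀ x : Fin 3 → ℝ,
      hamVF (sirPoisson α β φ₁ φ₂) totalPop3 x = sirField α β φ₁ φ₂ x) ∧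
    (∀ γ : ℝ → Fin 3 → ℝ, ∀ t : ℝ,
      HasDerivAt γ (hamVF (sirPoisson α β φ₁ φ₂) totalPop3 (γ t)) t →
      HasDerivAt γ (sirField α β φ₁ φ₂ (γ t)) t) := by
  have key : ∀ x : Fin 3 → ℝ,
      hamVF (sirPoisson α β φ₁ φ₂) totalPop3 x = sirField α β φ₁ φ₂ x := by
    intro x
    funext i
    have hd : ∀ j : Fin 3, fderiv ℝ totalPop3 x (Pi.single j 1) = 1 := by
      intro j
      rw [fderiv_totalPop3]
      fin_cases j <;> simp [Pi.single_apply]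
    have hf : (fun j => fderiv ℝ totalPop3 x (Pi.single j 1)) = fun _ => (1:ℝ) :=
      funext hd
    simp only [hamVF, hf]
    fin_cases i <;>
      simp [sirPoisson, sirField, Matrix.mulVec, dotProduct, Fin.sum_univ_three,
        Matrix.vecHead, Matrix.vecTail] <;> ring
  refine ⟨key, fun γ t h => ?_⟩
  rwa [key] at h
end

section
/- Fix M ≥ 2 and continuously differentiable functions f¹, …, f^{M−1} : ℝ^{M−1} → ℝ. Define the skew-symmetric matrix-valued map π : ℝ^M → Matrix(M,M,ℝ) by π_{μ M}(x) = f^μ(x¹,…,x^{M−1}) for μ ∈ {1,…,M−1}, π_{μ ν}(x) = 0 for μ,ν ∈ {1,…,M−1}, and skew-symmetry determining the remaining entries. Then π satisfies the Jacobi identity: for all x and indices μ,ν,λ, ∑_σ (π_{σ λ}(x)·∂_σ π_{μ ν}(x) + π_{σ μ}(x)·∂_σ π_{ν λ}(x) + π_{σ ν}(x)·∂_σ π_{λ μ}(x)) = 0. -/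
/-- The Poisson structure of a compartmental model with `M = n + 1` compartments and
constant population: `π_{μ M}(x) = f^μ(x¹,…,x^{M−1})` for `μ < M`, `π_{μ ν} = 0` for
`μ, ν < M`, skew-symmetry determining the remaining entries. -/
noncomputable def compPoisson (n : ℕ) (f : Fin n → (Fin n → ℝ) → ℝ)
    (x : Fin (n + 1) → ℝ) : Matrix (Fin (n + 1)) (Fin (n + 1)) ℝ :=
  fun i j =>
    if hi : (i : ℕ) < n then
      if (j : ℕ) = n then f ⟨i, hi⟩ (fun μ => x μ.castSucc) else 0
    else if hj : (j : ℕ) < n then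
      if (i : ℕ) = n then -f ⟨j, hj⟩ (fun μ => x μ.castSucc) else 0
    else 0

theorem compartmental_poisson_jacobi (n : ℕ) (hn : 1 ≤ n)
    (f : Fin n → (Fin n → ℝ) → ℝ) (hf : ∀ μ, ContDiff ℝ 1 (f μ)) :
    JacobiIdentity (compPoisson n f) := by
  set L : (Fin (n + 1) → ℝ) →L[ℝ] (Fin n → ℝ) :=
    ContinuousLinearMap.pi (fun ν : Fin n => ContinuousLinearMap.proj ν.castSucc) with hLdef
  have p1 : ∀ (y : Fin (n+1) → ℝ) (a b : Fin n),
      compPoisson n f y a.castSucc b.castSucc = 0 := by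
    intro y a b
    simp [compPoisson, b.is_lt.ne]
  have p2 : ∀ (y : Fin (n+1) → ℝ) (a : Fin n),
      compPoisson n f y a.castSucc (Fin.last n) = f a (fun ν => y ν.castSucc) := by
    intro y a
    simp [compPoisson]
  have p3 : ∀ (y : Fin (n+1) → ℝ) (a : Fin n),
      compPoisson n f y (Fin.last n) a.castSucc = -(f a (fun ν => y ν.castSucc)) := by
    intro y a
    simp [compPoisson, a.is_lt]
  have p4 : ∀ (y : Fin (n+1) → ℝ),
      compPoisson n f y (Fin.last n) (Fin.last n) = 0 := by
    intro y; simp [compPoisson]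
  have e1 : ∀ (a b : Fin n), (fun y : Fin (n+1) → ℝ =>
      compPoisson n f y a.castSucc b.castSucc) = fun _ => (0:ℝ) := by
    intro a b; funext y; exact p1 y a b
  have e2 : ∀ (a : Fin n), (fun y : Fin (n+1) → ℝ =>
      compPoisson n f y a.castSucc (Fin.last n)) = fun y => f a (fun ν => y ν.castSucc) := by
    intro a; funext y; exact p2 y a
  have e3 : ∀ (a : Fin n), (fun y : Fin (n+1) → ℝ =>
      compPoisson n f y (Fin.last n) a.castSucc)
      = fun y => -(f a (fun ν => y ν.castSucc)) := by
    intro a; funext y; exact p3 y a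
  have e4 : (fun y : Fin (n+1) → ℝ =>
      compPoisson n f y (Fin.last n) (Fin.last n)) = fun _ => (0:ℝ) := by
    funext y; exact p4 y
  -- derivative of f a ∘ restriction in the last direction is zero
  have hder : ∀ (a : Fin n) (x : Fin (n+1) → ℝ),
      fderiv ℝ (fun y : Fin (n+1) → ℝ => f a (fun ν => y ν.castSucc)) x
        (Pi.single (Fin.last n) 1) = 0 := by
    intro a x
    have hL : (fun y : Fin (n+1) → ℝ => f a (fun ν => y ν.castSucc)) = (f a) ∘ ⇑L := rfl
    rw [hL, fderiv_comp x (((hf a).differentiable one_ne_zero).differentiableAt)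
      L.differentiableAt, L.fderiv]
    have hz : L (Pi.single (Fin.last n) 1) = 0 := by
      funext ν
      simp [hLdef, Pi.single_eq_of_ne (Fin.castSucc_lt_last ν).ne]
    simp [hz]
  -- derivative of any entry in the last direction is zero
  have hd0 : ∀ (i j : Fin (n+1)) (x : Fin (n+1) → ℝ),
      fderiv ℝ (fun y => compPoisson n f y i j) x (Pi.single (Fin.last n) 1) = 0 := by
    intro i j x
    rcases Fin.eq_castSucc_or_eq_last i with ⟨a, rfl⟩ | rfl <;>
      rcases Fin.eq_castSucc_or_eq_last j with ⟨b, rfl⟩ | rfl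
    · rw [e1]; simp
    · rw [e2]; exact hder a x
    · rw [e3, fderiv_fun_neg]; simp [hder b x]
    · rw [e4]; simp
  intro x i j k
  apply Finset.sum_eq_zero
  intro l _
  rcases Fin.eq_castSucc_or_eq_last l with ⟨μ, rfl⟩ | rfl
  · rcases Fin.eq_castSucc_or_eq_last i with ⟨a, rfl⟩ | rfl <;>
      rcases Fin.eq_castSucc_or_eq_last j with ⟨b, rfl⟩ | rfl <;>
      rcases Fin.eq_castSucc_or_eq_last k with ⟨c, rfl⟩ | rfl <;>
      simp only [p1, p2, e1, e2, e3, e4, fderiv_fun_neg, ContinuousLinearMap.neg_apply,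
        fderiv_fun_const, Pi.zero_apply, ContinuousLinearMap.zero_apply] <;>
      ring
  · simp [hd0]
end

section
/- Fix M ≥ 2 and functions f¹, …, f^{M−1} : ℝ^{M−1} → ℝ. Let π : ℝ^M → Matrix(M,M,ℝ) be the skew-symmetric matrix-valued map with π_{μ M}(x) = f^μ(x¹,…,x^{M−1}) for μ ∈ {1,…,M−1} and π_{μ ν}(x) = 0 for μ,ν ∈ {1,…,M−1}, and let H(x) = ∑_{μ=1}^M x^μ. Then for every x ∈ ℝ^M, (π(x)·∇H(x))_μ = f^μ(x¹,…,x^{M−1}) for μ ∈ {1,…,M−1} and (π(x)·∇H(x))_M = −∑_{μ=1}^{M−1} f^μ(x¹,…,x^{M−1}). Hence every compartmental model with constant population is a Hamiltonian system with Hamiltonian equal to the total population. -/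
lemma fderiv_sum_coords (m : ℕ) (x : Fin m → ℝ) (j : Fin m) :
    fderiv ℝ (fun y : Fin m → ℝ => ∑ ν, y ν) x (Pi.single j 1) = 1 := by
  have h : (fun y : Fin m → ℝ => ∑ ν, y ν)
      = fun y => (∑ ν, (ContinuousLinearMap.proj ν :
        (Fin m → ℝ) →L[ℝ] ℝ)) y := by
    ext y; simp
  rw [h, (∑ ν, (ContinuousLinearMap.proj ν :
      (Fin m → ℝ) →L[ℝ] ℝ)).fderiv]
  simp [ContinuousLinearMap.sum_apply, Pi.single_apply,
    Finset.sum_ite_eq' (Finset.univ : Finset (Fin m)) j]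

/-- Every compartmental model with constant population is a Hamiltonian system, with
Hamiltonian the total population `H(x) = ∑ μ, x^μ`: the Hamiltonian vector field of the
compartmental Poisson structure reproduces the compartmental dynamics. -/
theorem compartmental_hamiltonian (n : ℕ) (hn : 1 ≤ n)
    (f : Fin n → (Fin n → ℝ) → ℝ) :
    ∀ x : Fin (n + 1) → ℝ,
      (∀ μ : Fin n,
        hamVF (compPoisson n f) (fun y => ∑ ν, y ν) x μ.castSucc =
          f μ (fun ν => x ν.castSucc)) ∧
      hamVF (compPoisson n f) (fun y => ∑ ν, y ν) x (Fin.last n) =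
        -∑ μ : Fin n, f μ (fun ν => x ν.castSucc) := by
  intro x
  have hgrad : ∀ j : Fin (n + 1),
      fderiv ℝ (fun y : Fin (n + 1) → ℝ => ∑ ν, y ν) x (Pi.single j 1) = 1 :=
    fun j => fderiv_sum_coords (n + 1) x j
  have key : ∀ i, hamVF (compPoisson n f) (fun y => ∑ ν, y ν) x i
      = ∑ j, compPoisson n f x i j := by
    intro i
    simp only [hamVF, Matrix.mulVec, dotProduct, hgrad, mul_one]
  constructor
  · intro μ
    rw [key]
    rw [Fin.sum_univ_castSucc]
    have h1 : ∀ j : Fin n, compPoisson n f x μ.castSucc j.castSucc = 0 := by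
      intro j
      simp [compPoisson, μ.isLt, Nat.ne_of_lt j.isLt]
    have h2 : compPoisson n f x μ.castSucc (Fin.last n)
        = f μ (fun ν => x ν.castSucc) := by
      simp [compPoisson, μ.isLt, Fin.val_last]
    simp [h1, h2]
  · rw [key (Fin.last n)]
    rw [Fin.sum_univ_castSucc]
    have h1 : ∀ j : Fin n, compPoisson n f x (Fin.last n) j.castSucc
        = -f j (fun ν => x ν.castSucc) := by
      intro j
      simp [compPoisson, Fin.val_last, j.isLt]
    have h2 : compPoisson n f x (Fin.last n) (Fin.last n) = 0 := by
      simp [compPoisson]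
    simp [h1, h2, Finset.sum_neg_distrib]
end

section
/- Let α, β, ε ∈ ℝ and let φ₁, φ₂, φ₃ : ℝ³ → ℝ be continuously differentiable. Define the skew-symmetric matrix-valued map π : ℝ⁴ → Matrix(4,4,ℝ) on coordinates (S,E,I,R) by π_{SR} = −β·S·I + φ₁(S,E,I), π_{ER} = β·S·I − ε·E + φ₂(S,E,I), π_{IR} = −α·I + ε·E + φ₃(S,E,I), π_{SI} = π_{SE} = π_{EI} = 0 (skew-symmetry determining the remaining entries). Then π satisfies the Jacobi identity: for all x ∈ ℝ⁴ and all indices i,j,k, ∑_l (π_{l i}(x)·∂_l π_{j k}(x) + π_{l j}(x)·∂_l π_{k i}(x) + π_{l k}(x)·∂_l π_{i j}(x)) = 0. -/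
/-- The Poisson structure of the generalized SEIR model on coordinates
`(S,E,I,R) = (x 0, x 1, x 2, x 3)`: `π_{SR} = −β·S·I + φ₁(S,E,I)`,
`π_{ER} = β·S·I − ε·E + φ₂(S,E,I)`, `π_{IR} = −α·I + ε·E + φ₃(S,E,I)`,
`π_{SE} = π_{SI} = π_{EI} = 0`, skew-symmetry determining the remaining entries. -/
noncomputable def seirPoisson (α β ε : ℝ) (φ₁ φ₂ φ₃ : ℝ × ℝ × ℝ → ℝ) (x : Fin 4 → ℝ) :
    Matrix (Fin 4) (Fin 4) ℝ :=
  Matrix.of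
    ![![0, 0, 0, -β * x 0 * x 2 + φ₁ (x 0, x 1, x 2)],
      ![0, 0, 0, β * x 0 * x 2 - ε * x 1 + φ₂ (x 0, x 1, x 2)],
      ![0, 0, 0, -α * x 2 + ε * x 1 + φ₃ (x 0, x 1, x 2)],
      ![-(-β * x 0 * x 2 + φ₁ (x 0, x 1, x 2)),
        -(β * x 0 * x 2 - ε * x 1 + φ₂ (x 0, x 1, x 2)),
        -(-α * x 2 + ε * x 1 + φ₃ (x 0, x 1, x 2)), 0]]


noncomputable def seirProj3 : (Fin 4 → ℝ) →L[ℝ] ℝ × ℝ × ℝ :=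
  (ContinuousLinearMap.proj 0).prod ((ContinuousLinearMap.proj 1).prod (ContinuousLinearMap.proj 2))

lemma seirDeriv3 (F : ℝ × ℝ × ℝ → ℝ) (hF : Differentiable ℝ F) (x : Fin 4 → ℝ) :
    fderiv ℝ (fun y : Fin 4 → ℝ => F (y 0, y 1, y 2)) x (Pi.single (3 : Fin 4) 1) = 0 := by
  have hp : HasFDerivAt (fun y : Fin 4 → ℝ => (y 0, y 1, y 2)) seirProj3 x :=
    seirProj3.hasFDerivAt
  have h := ((hF (x 0, x 1, x 2)).hasFDerivAt).comp x hp
  rw [show (fun y : Fin 4 → ℝ => F (y 0, y 1, y 2)) = F ∘ (fun y : Fin 4 → ℝ => (y 0, y 1, y 2))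
        from rfl, h.fderiv]
  have : seirProj3 (Pi.single (3 : Fin 4) 1) = (0, 0, 0) := by
    simp [seirProj3, Pi.single_eq_of_ne]
  simp [this]
  exact map_zero _

/-- The entries of the last column of the SEIR Poisson matrix. -/
noncomputable def seirCol (α β ε : ℝ) (φ₁ φ₂ φ₃ : ℝ × ℝ × ℝ → ℝ) :
    Fin 4 → (Fin 4 → ℝ) → ℝ :=
  ![fun y => -β * y 0 * y 2 + φ₁ (y 0, y 1, y 2),
    fun y => β * y 0 * y 2 - ε * y 1 + φ₂ (y 0, y 1, y 2),
    fun y => -α * y 2 + ε * y 1 + φ₃ (y 0, y 1, y 2),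
    fun _ => 0]

lemma seirPoisson_apply' (α β ε : ℝ) (φ₁ φ₂ φ₃ : ℝ × ℝ × ℝ → ℝ) (y : Fin 4 → ℝ)
    (i j : Fin 4) :
    seirPoisson α β ε φ₁ φ₂ φ₃ y i j =
      (if j = 3 then seirCol α β ε φ₁ φ₂ φ₃ i y else 0) -
      (if i = 3 then seirCol α β ε φ₁ φ₂ φ₃ j y else 0) := by
  fin_cases i <;> fin_cases j <;> simp [seirPoisson, seirCol]

lemma seirCol_deriv3 (α β ε : ℝ) (φ₁ φ₂ φ₃ : ℝ × ℝ × ℝ → ℝ)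
    (hφ₁ : ContDiff ℝ 1 φ₁) (hφ₂ : ContDiff ℝ 1 φ₂) (hφ₃ : ContDiff ℝ 1 φ₃)
    (m : Fin 4) (x : Fin 4 → ℝ) :
    fderiv ℝ (seirCol α β ε φ₁ φ₂ φ₃ m) x (Pi.single (3 : Fin 4) 1) = 0 := by
  have d1 := hφ₁.differentiable one_ne_zero
  have d2 := hφ₂.differentiable one_ne_zero
  have d3 := hφ₃.differentiable one_ne_zero
  fin_cases m
  · exact seirDeriv3 (fun p => -β * p.1 * p.2.2 + φ₁ p) (by fun_prop) x
  · exact seirDeriv3 (fun p => β * p.1 * p.2.2 - ε * p.2.1 + φ₂ p) (by fun_prop) x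
  · exact seirDeriv3 (fun p => -α * p.2.2 + ε * p.2.1 + φ₃ p) (by fun_prop) x
  · simp [seirCol]

theorem generalizedSEIR_poisson_jacobi (α β ε : ℝ) (φ₁ φ₂ φ₃ : ℝ × ℝ × ℝ → ℝ)
    (hφ₁ : ContDiff ℝ 1 φ₁) (hφ₂ : ContDiff ℝ 1 φ₂) (hφ₃ : ContDiff ℝ 1 φ₃) :
    JacobiIdentity (seirPoisson α β ε φ₁ φ₂ φ₃) := by
  intro x i j k
  have hd := seirCol_deriv3 α β ε φ₁ φ₂ φ₃ hφ₁ hφ₂ hφ₃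
  simp only [seirPoisson_apply', Fin.sum_univ_four]
  by_cases hi : i = 3 <;> by_cases hj : j = 3 <;> by_cases hk : k = 3 <;>
    simp [hi, hj, hk, fderiv_neg, hd]
end

section
/- Let α, β, ε ∈ ℝ and φ₁, φ₂, φ₃ : ℝ³ → ℝ. With π : ℝ⁴ → Matrix(4,4,ℝ) the skew-symmetric map on coordinates (S,E,I,R) given by π_{SR} = −β·S·I + φ₁(S,E,I), π_{ER} = β·S·I − ε·E + φ₂(S,E,I), π_{IR} = −α·I + ε·E + φ₃(S,E,I), π_{SI} = π_{SE} = π_{EI} = 0, and H(S,E,I,R) = S + E + I + R, one has for all (S,E,I,R) ∈ ℝ⁴ that π·∇H equals the generalized SEIR vector field (−β·S·I + φ₁, β·S·I − ε·E + φ₂, −α·I + ε·E + φ₃, α·I − φ₁ − φ₂ − φ₃). -/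
/-- With the total population Hamiltonian `H(S,E,I,R) = S + E + I + R`, the Hamiltonian
vector field of the SEIR Poisson structure is the generalized SEIR vector field. -/
theorem generalizedSEIR_hamiltonian (α β ε : ℝ) (φ₁ φ₂ φ₃ : ℝ × ℝ × ℝ → ℝ) :
    ∀ x : Fin 4 → ℝ,
      hamVF (seirPoisson α β ε φ₁ φ₂ φ₃) (fun y => y 0 + y 1 + y 2 + y 3) x =
        ![-β * x 0 * x 2 + φ₁ (x 0, x 1, x 2),
          β * x 0 * x 2 - ε * x 1 + φ₂ (x 0, x 1, x 2),
          -α * x 2 + ε * x 1 + φ₃ (x 0, x 1, x 2),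
          α * x 2 - φ₁ (x 0, x 1, x 2) - φ₂ (x 0, x 1, x 2) - φ₃ (x 0, x 1, x 2)] := by
  intro x
  have hH : HasFDerivAt (fun y : Fin 4 → ℝ => y 0 + y 1 + y 2 + y 3)
      (ContinuousLinearMap.proj (0 : Fin 4) + ContinuousLinearMap.proj (1 : Fin 4) +
       ContinuousLinearMap.proj (2 : Fin 4) + ContinuousLinearMap.proj (3 : Fin 4)) x :=
    ((((ContinuousLinearMap.proj (R := ℝ) (φ := fun _ : Fin 4 => ℝ) 0).hasFDerivAt.add
      (ContinuousLinearMap.proj 1).hasFDerivAt).add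
      (ContinuousLinearMap.proj 2).hasFDerivAt).add
      (ContinuousLinearMap.proj 3).hasFDerivAt)
  have hgrad : ∀ j : Fin 4,
      fderiv ℝ (fun y : Fin 4 → ℝ => y 0 + y 1 + y 2 + y 3) x (Pi.single j 1) = 1 := by
    intro j
    rw [hH.fderiv]
    fin_cases j <;> simp [ContinuousLinearMap.proj, Pi.single]
  funext i
  simp only [hamVF, hgrad]
  fin_cases i <;>
    simp [seirPoisson, Matrix.mulVec, dotProduct, Fin.sum_univ_four]; ring
end

section
/- Let α, β, μ ∈ ℝ with β ≠ 0, and let S₀ ∈ ℝ with β·S₀ − μ > 0. Suppose (S,I,R) : [0,T) → ℝ³ is differentiable, solves the endemic SIRS system Ṡ = −β·S·I + μ·I, İ = β·S·I − (α+μ)·I, Ṙ = α·I, satisfies S(0) = S₀, I(0) = 1 − S₀, R(0) = 0, and β·S(t) − μ > 0 for all t ∈ [0,T). Then for all t ∈ [0,T): R(t) = −(α/β)·log((β·S(t) − μ)/(β·S₀ − μ)) and I(t) = 1 − S(t) + (α/β)·log((β·S(t) − μ)/(β·S₀ − μ)); consequently S satisfies the reduced scalar ODE Ṡ = (S − μ/β)·(−β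 + β·S − α·log((β·S − μ)/(β·S₀ − μ))). -/
lemma const_of_deriv_zero_Ico {T : ℝ} (f : ℝ → ℝ)
    (hf : ∀ x ∈ Set.Ico (0 : ℝ) T, HasDerivAt f 0 x) :
    ∀ t ∈ Set.Ico (0 : ℝ) T, f t = f 0 := by
  intro t ht
  obtain ⟨ht0, htT⟩ := ht
  have hsub : Set.Icc (0 : ℝ) t ⊆ Set.Ico (0 : ℝ) T := fun x hx =>
    ⟨hx.1, lt_of_le_of_lt hx.2 htT⟩
  exact constant_of_has_deriv_right_zero
    (fun x hx => ((hf x (hsub hx)).continuousAt).continuousWithinAt)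
    (fun x hx => ((hf x (hsub ⟨hx.1, hx.2.le⟩)).hasDerivWithinAt)) t ⟨ht0, le_rfl⟩

/-- For a solution of the endemic SIRS system `Ṡ = −β·S·I + μ·I`, `İ = β·S·I − (α+μ)·I`,
`Ṙ = α·I` on `[0,T)` with initial conditions `S(0) = S₀`, `I(0) = 1 − S₀`, `R(0) = 0`
(so that the Casimir level is `C = 0` and the population is `1`), and with
`β·S(t) − μ > 0` throughout, the Casimir and the conservation of the total population give
`R = −(α/β)·log((β·S − μ)/(β·S₀ − μ))` and `I = 1 − S + (α/β)·log((β·S − μ)/(β·S₀ − μ))`,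
whence `S` satisfies the reduced scalar ODE
`Ṡ = (S − μ/β)·(−β + β·S − α·log((β·S − μ)/(β·S₀ − μ)))`. -/
theorem endemicSIRS_casimir_reduction (α β μ T S₀ : ℝ) (hβ : β ≠ 0) (hT : 0 < T)
    (hS₀ : β * S₀ - μ > 0) (S I R : ℝ → ℝ)
    (hS : ∀ t ∈ Set.Ico (0 : ℝ) T, HasDerivAt S (-β * S t * I t + μ * I t) t)
    (hI : ∀ t ∈ Set.Ico (0 : ℝ) T, HasDerivAt I (β * S t * I t - (α + μ) * I t) t)
    (hR : ∀ t ∈ Set.Ico (0 : ℝ) T, HasDerivAt R (α * I t) t)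
    (hS0 : S 0 = S₀) (hI0 : I 0 = 1 - S₀) (hR0 : R 0 = 0)
    (hpos : ∀ t ∈ Set.Ico (0 : ℝ) T, β * S t - μ > 0) :
    ∀ t ∈ Set.Ico (0 : ℝ) T,
      R t = -(α / β) * Real.log ((β * S t - μ) / (β * S₀ - μ)) ∧
      I t = 1 - S t + α / β * Real.log ((β * S t - μ) / (β * S₀ - μ)) ∧
      HasDerivAt S
        ((S t - μ / β) *
          (-β + β * S t - α * Real.log ((β * S t - μ) / (β * S₀ - μ)))) t := by
  have h0 : (0 : ℝ) ∈ Set.Ico (0 : ℝ) T := ⟨le_rfl, hT⟩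
  -- total population conservation
  have hNconst : ∀ t ∈ Set.Ico (0 : ℝ) T, S t + I t + R t = 1 := by
    have := const_of_deriv_zero_Ico (T := T) (fun t => S t + I t + R t) ?_
    · intro t ht
      rw [this t ht, hS0, hI0, hR0]; ring
    · intro x hx
      have := ((hS x hx).add (hI x hx)).add (hR x hx)
      exact this.congr_deriv (by ring)
  -- Casimir conservation
  have hCconst : ∀ t ∈ Set.Ico (0 : ℝ) T,
      R t + α / β * Real.log (β * S t - μ) = α / β * Real.log (β * S₀ - μ) := by
    have := const_of_deriv_zero_Ico (T := T)
      (fun t => R t + α / β * Real.log (β * S t - μ)) ?_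
    · intro t ht
      rw [this t ht, hR0, hS0]; ring
    · intro x hx
      have hne : β * S x - μ ≠ 0 := (hpos x hx).ne'
      have h1 : HasDerivAt (fun t => β * S t - μ)
          (β * (-β * S x * I x + μ * I x)) x := ((hS x hx).const_mul β).sub_const μ
      have h2 := (Real.hasDerivAt_log hne).comp x h1
      have := (hR x hx).add (h2.const_mul (α / β))
      refine this.congr_deriv ?_
      field_simp
      ring
  intro t ht
  have hne : β * S t - μ ≠ 0 := (hpos t ht).ne'
  have hlog : Real.log ((β * S t - μ) / (β * S₀ - μ)) =
      Real.log (β * S t - μ) - Real.log (β * S₀ - μ) :=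
    Real.log_div hne hS₀.ne'
  have hRt : R t = -(α / β) * Real.log ((β * S t - μ) / (β * S₀ - μ)) := by
    have := hCconst t ht
    rw [hlog]; linarith
  have hIt : I t = 1 - S t + α / β * Real.log ((β * S t - μ) / (β * S₀ - μ)) := by
    have := hNconst t ht
    rw [hRt] at this; linarith
  refine ⟨hRt, hIt, ?_⟩
  have := hS t ht
  convert this using 1
  rw [hIt]
  field_simp
  ring
end
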